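/- The set { 2·⌊(3·⌊(10·⌊(9n + 1)/8⌋ + 8)/9⌋ + 1)/2⌋ + 1 : n a positive integer } equals the set of integers m > 5 that are coprime to 30; that is, the formula eliminates from the integers greater than 5 exactly the multiples of 2, 3 and 5. -/

import Mathlib

theorem formula_2_3_5_values :
    {m : ℤ | ∃ n : ℤ, 0 < n ∧
        m = 2 * ⌊(3 * (⌊(10 * (⌊(9 * (n : ℚ) + 1) / 8⌋ : ℚ) + 8) / 9⌋ : ℚ) + 1) / 2⌋ + 1} =
      {m : ℤ | 5 < m ∧ IsCoprime m 30} := by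
  have key : ∀ n : ℤ,
      2 * ⌊(3 * (⌊(10 * (⌊(9 * (n : ℚ) + 1) / 8⌋ : ℚ) + 8) / 9⌋ : ℚ) + 1) / 2⌋ + 1
      = 2 * ((3 * ((10 * ((9 * n + 1) / 8) + 8) / 9) + 1) / 2) + 1 := by
    intro n
    have h1 : (9 * (n : ℚ) + 1) / 8 = ((9 * n + 1 : ℤ) : ℚ) / ((8 : ℕ) : ℚ) := by
      push_cast; ring
    rw [h1, Rat.floor_intCast_div_natCast]
    have h2 : (10 * (((9 * n + 1) / ((8:ℕ):ℤ) : ℤ) : ℚ) + 8) / 9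
        = ((10 * ((9 * n + 1) / 8) + 8 : ℤ) : ℚ) / ((9 : ℕ) : ℚ) := by push_cast; ring
    rw [h2, Rat.floor_intCast_div_natCast]
    have h3 : (3 * (((10 * ((9 * n + 1) / 8) + 8) / ((9:ℕ):ℤ) : ℤ) : ℚ) + 1) / 2
        = ((3 * ((10 * ((9 * n + 1) / 8) + 8) / 9) + 1 : ℤ) : ℚ) / ((2 : ℕ) : ℚ) := by
      push_cast; ring
    rw [h3, Rat.floor_intCast_div_natCast]
    norm_num
  ext m
  simp only [Set.mem_setOf_eq, key]
  constructor
  · rintro ⟨n, hn, rfl⟩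
    obtain ⟨q, r, hr0, hr8, rfl⟩ : ∃ q r : ℤ, 0 ≤ r ∧ r < 8 ∧ n = 8 * q + r :=
      ⟨n / 8, n % 8, Int.emod_nonneg n (by norm_num), Int.emod_lt_of_pos n (by norm_num),
        (Int.mul_ediv_add_emod n 8).symm⟩
    set m := 2 * ((3 * ((10 * ((9 * (8 * q + r) + 1) / 8) + 8) / 9) + 1) / 2) + 1 with hm
    have hfacts : ¬ (2 ∣ m) ∧ ¬ (3 ∣ m) ∧ ¬ (5 ∣ m) ∧ 5 < m := by
      interval_cases r <;> omega
    obtain ⟨h2, h3, h5, h6⟩ := hfacts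
    refine ⟨h6, ?_⟩
    rw [Int.isCoprime_iff_gcd_eq_one]
    set g : ℕ := Int.gcd m 30 with hg
    have hgm : (g : ℤ) ∣ m := Int.gcd_dvd_left _ _
    have hg30 : g ∣ 30 := by
      have : (g : ℤ) ∣ ((30:ℕ):ℤ) := by exact_mod_cast (Int.gcd_dvd_right (a := m) (b := 30))
      exact_mod_cast this
    have h2g : ¬ (2 ∣ g) := fun hd =>
      h2 (dvd_trans (by exact_mod_cast Int.natCast_dvd_natCast.mpr hd) hgm)
    have h3g : ¬ (3 ∣ g) := fun hd =>
      h3 (dvd_trans (by exact_mod_cast Int.natCast_dvd_natCast.mpr hd) hgm)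
    have h5g : ¬ (5 ∣ g) := fun hd =>
      h5 (dvd_trans (by exact_mod_cast Int.natCast_dvd_natCast.mpr hd) hgm)
    have hgle : g ≤ 30 := Nat.le_of_dvd (by norm_num) hg30
    interval_cases g <;> omega
  · rintro ⟨hm, hcop⟩
    have hgcd : Int.gcd m 30 = 1 := Int.isCoprime_iff_gcd_eq_one.mp hcop
    have h2 : ¬ ((2:ℤ) ∣ m) := by
      intro h
      have : (2:ℤ) ∣ (Int.gcd m 30 : ℤ) := Int.dvd_coe_gcd h (by norm_num)
      rw [hgcd] at this; norm_num at this
    have h3 : ¬ ((3:ℤ) ∣ m) := by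
      intro h
      have : (3:ℤ) ∣ (Int.gcd m 30 : ℤ) := Int.dvd_coe_gcd h (by norm_num)
      rw [hgcd] at this; norm_num at this
    have h5 : ¬ ((5:ℤ) ∣ m) := by
      intro h
      have : (5:ℤ) ∣ (Int.gcd m 30 : ℤ) := Int.dvd_coe_gcd h (by norm_num)
      rw [hgcd] at this; norm_num at this
    have h2' : m % 2 = 1 := by omega
    have h3' : m % 3 ≠ 0 := by omega
    have h5' : m % 5 ≠ 0 := by omega
    have h30 : m % 30 = 1 ∨ m % 30 = 7 ∨ m % 30 = 11 ∨ m % 30 = 13 ∨ m % 30 = 17 ∨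
        m % 30 = 19 ∨ m % 30 = 23 ∨ m % 30 = 29 := by
      have hr0 : 0 ≤ m % 30 := Int.emod_nonneg m (by norm_num)
      have hr30 : m % 30 < 30 := Int.emod_lt_of_pos m (by norm_num)
      set r := m % 30 with hrdef
      interval_cases r <;> omega
    rcases h30 with h|h|h|h|h|h|h|h
    · exact ⟨8 * (m / 30), by omega, by omega⟩
    · exact ⟨8 * (m / 30) + 1, by omega, by omega⟩
    · exact ⟨8 * (m / 30) + 2, by omega, by omega⟩
    · exact ⟨8 * (m / 30) + 3, by omega, by omega⟩
    · exact ⟨8 * (m / 30) + 4, by omega, by omega⟩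
    · exact ⟨8 * (m / 30) + 5, by omega, by omega⟩
    · exact ⟨8 * (m / 30) + 6, by omega, by omega⟩
    · exact ⟨8 * (m / 30) + 7, by omega, by omega⟩
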